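/- Let μ₁, μ₂, τ₁, τ₂, η, σ ∈ ℂ with η ≠ 0, μ₁ ≠ μ₂, μ₁ ≠ ησ and μ₂ ≠ ησ. Define p¹ = τ₂(ημ₁ − σ)/(μ₁ − ησ) and p² = τ₂(ημ₂ − σ)/(μ₂ − ησ). If the Bethe equation τ₁(μ₁ − ησ)(μ₂ − ησ) = τ₂(ημ₁ − σ)(ημ₂ − σ) holds, then ((μ₁η⁻¹ − μ₂η)/(μ₁ − μ₂))·p¹ + ((μ₂η⁻¹ − μ₁η)/(μ₂ − μ₁))·p² = τ₁ + τ₂ and p¹·p² = τ₁·τ₂. -/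

import Mathlib

/-- **Magnetic frame for T[U(2)]**: with momenta `p¹ = τ₂(ημ₁−σ)/(μ₁−ησ)` and
`p² = τ₂(ημ₂−σ)/(μ₂−ησ)`, the Bethe equation implies the two-body trigonometric
Ruijsenaars–Schneider relations in the magnetic frame. -/
theorem tu2_magnetic_frame (μ₁ μ₂ τ₁ τ₂ η σ : ℂ) (hη : η ≠ 0) (hμ : μ₁ ≠ μ₂)
    (h1 : μ₁ ≠ η * σ) (h2 : μ₂ ≠ η * σ)
    (hbethe : τ₁ * (μ₁ - η * σ) * (μ₂ - η * σ) = τ₂ * (η * μ₁ - σ) * (η * μ₂ - σ)) :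
    (μ₁ * η⁻¹ - μ₂ * η) / (μ₁ - μ₂) * (τ₂ * (η * μ₁ - σ) / (μ₁ - η * σ)) +
      (μ₂ * η⁻¹ - μ₁ * η) / (μ₂ - μ₁) * (τ₂ * (η * μ₂ - σ) / (μ₂ - η * σ)) = τ₁ + τ₂ ∧
    (τ₂ * (η * μ₁ - σ) / (μ₁ - η * σ)) * (τ₂ * (η * μ₂ - σ) / (μ₂ - η * σ)) = τ₁ * τ₂ := by
  have h1' : μ₁ - η * σ ≠ 0 := sub_ne_zero.mpr h1
  have h2' : μ₂ - η * σ ≠ 0 := sub_ne_zero.mpr h2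
  have hμ' : μ₁ - μ₂ ≠ 0 := sub_ne_zero.mpr hμ
  have hμ2 : μ₂ - μ₁ ≠ 0 := sub_ne_zero.mpr (Ne.symm hμ)
  constructor
  · field_simp
    linear_combination (η * (μ₁ - μ₂) ^ 2) * hbethe
  · field_simp
    linear_combination (-τ₂) * hbethe
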